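/- Let 0 < ε ≤ 1, let D ≥ 2 be an integer, let c > 0 and q > 0 be reals, and fix d ∈ {1,…,D}. Consider the set of vectors p ∈ ℝ^D such that every coordinate of p has the form c·(1+ε)^x for some integer x, p^{(d)} = q, and every coordinate p^{(d'')} satisfies p^{(d'')} ≥ (ε/D)·max_{d'} p^{(d')}. Then the cardinality of this set is at most (2·⌈log_{1+ε}(D/ε)⌉ + 1)^{D−1}. -/

import Mathlib

/-- The set of grid vectors sharing the value `q` in dimension `d`: every coordinate lies
on the geometric grid `{c·(1+ε)^x : x ∈ ℤ}` and is at least `ε/D` times the largest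
coordinate. -/
def gridVecs (ε c q : ℝ) (D : ℕ) (d : Fin D) : Set (Fin D → ℝ) :=
  {p | (∀ d'' : Fin D, ∃ x : ℤ, p d'' = c * (1 + ε) ^ x) ∧ p d = q ∧
    ∀ d'' : Fin D, ε / D * (⨆ d' : Fin D, p d') ≤ p d''}

/-- If `b^z ≤ r` with `1 < b`, then `z ≤ ⌈logb b r⌉`. -/
lemma zpow_le_imp_le_ceil_logb {b r : ℝ} (hb : 1 < b) {z : ℤ} (h : b ^ z ≤ r) :
    z ≤ ⌈Real.logb b r⌉ := by
  have hb0 : (0:ℝ) < b := lt_trans zero_lt_one hb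
  have hpos : (0:ℝ) < b ^ z := zpow_pos hb0 z
  have hr : 0 < r := lt_of_lt_of_le hpos h
  have : (z:ℝ) ≤ Real.logb b r := by
    rw [Real.le_logb_iff_rpow_le hb hr, Real.rpow_intCast]
    exact h
  exact_mod_cast this.trans (Int.le_ceil _)

/-- There are at most `(2⌈log_{1+ε}(D/ε)⌉ + 1)^{D-1}` rounded
processing-time vectors sharing a fixed value `q` in a fixed dimension `d`. -/
theorem grid_vector_count (ε : ℝ) (hε : 0 < ε) (hε1 : ε ≤ 1) (D : ℕ) (hD : 2 ≤ D)
    (c q : ℝ) (hc : 0 < c) (hq : 0 < q) (d : Fin D) :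
    (gridVecs ε c q D d).Finite ∧
    (((gridVecs ε c q D d).ncard : ℤ) ≤
      (2 * ⌈Real.logb (1 + ε) (D / ε)⌉ + 1) ^ (D - 1)) := by
  have hb : (1:ℝ) < 1 + ε := by linarith
  have hb0 : (0:ℝ) < 1 + ε := by linarith
  set b : ℝ := 1 + ε with hbdef
  set L : ℤ := ⌈Real.logb b (D / ε)⌉ with hLdef
  have hD0 : (0:ℝ) < D := by exact_mod_cast lt_of_lt_of_le two_pos hD
  have hr1 : (1:ℝ) ≤ D / ε := by
    rw [le_div_iff₀ hε]
    have h2 : (2:ℝ) ≤ D := by exact_mod_cast hD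
    linarith
  have hL0 : 0 ≤ L := Int.ceil_nonneg (Real.logb_nonneg hb hr1)
  have hL1 : (0:ℤ) ≤ 2 * L + 1 := by linarith
  have hRHS : (0:ℤ) ≤ (2 * L + 1) ^ (D - 1) := pow_nonneg hL1 _
  by_cases hex : ∃ x₀ : ℤ, q = c * b ^ x₀
  · obtain ⟨x₀, hx₀⟩ := hex
    classical
    set F : Finset (Fin D → ℤ) :=
      Fintype.piFinset (fun i => if i = d then {x₀} else Finset.Icc (x₀ - L) (x₀ + L)) with hF
    have hsubset : gridVecs ε c q D d ⊆ (fun g : Fin D → ℤ => fun i => c * b ^ (g i)) '' ↑F := by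
      rintro p ⟨hgrid, hpd, hbound⟩
      choose g hg using hgrid
      have hne : Nonempty (Fin D) := ⟨d⟩
      have hbdd : BddAbove (Set.range p) := (Set.finite_range p).bddAbove
      have hsup : ∀ i : Fin D, p i ≤ ⨆ d' : Fin D, p d' := fun i => le_ciSup hbdd i
      have hεD : (0:ℝ) < ε / D := div_pos hε hD0
      -- each coordinate is between (ε/D) q and (D/ε) q
      have hlow : ∀ i, ε / D * q ≤ p i := by
        intro i
        calc ε / D * q = ε / D * p d := by rw [hpd]
          _ ≤ ε / D * (⨆ d', p d') := by
              exact mul_le_mul_of_nonneg_left (hsup d) hεD.le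
          _ ≤ p i := hbound i
      have hhigh : ∀ i, ε / D * p i ≤ q := by
        intro i
        calc ε / D * p i ≤ ε / D * (⨆ d', p d') :=
              mul_le_mul_of_nonneg_left (hsup i) hεD.le
          _ ≤ p d := hbound d
          _ = q := hpd
      -- exponent bounds
      have key : ∀ (z w : ℤ), c * b ^ z ≤ (D / ε) * (c * b ^ w) → z ≤ w + L := by
        intro z w h
        have hbz : b ^ (z - w) ≤ D / ε := by
          have hw : (0:ℝ) < b ^ w := zpow_pos hb0 w
          rw [zpow_sub₀ (ne_of_gt hb0), div_le_iff₀ hw]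
          have := (mul_le_mul_iff_right₀ hc).mp (by linarith [h] : c * b ^ z ≤ c * ((D/ε) * b ^ w))
          linarith [this]
        have := zpow_le_imp_le_ceil_logb hb hbz
        omega
      refine ⟨g, ?_, ?_⟩
      · rw [hF, Finset.mem_coe, Fintype.mem_piFinset]
        intro i
        by_cases hi : i = d
        · subst hi
          have hpow : b ^ (g i) = b ^ x₀ := by
            have h1 : c * b ^ (g i) = c * b ^ x₀ := by rw [← hg i, hpd, hx₀]
            exact mul_left_cancel₀ (ne_of_gt hc) h1
          have heq : g i = x₀ := zpow_right_injective₀ hb0 (ne_of_gt hb) hpow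
          simp [heq]
        · simp only [if_neg hi, Finset.mem_Icc]
          constructor
          · -- x₀ - L ≤ g i, i.e. x₀ ≤ g i + L : from q ≤ (D/ε) p i
            have hq' : q ≤ (D / ε) * p i := by
              rw [div_mul_eq_mul_div, le_div_iff₀ hε]
              have h := hlow i
              rw [div_mul_eq_mul_div, div_le_iff₀ hD0] at h
              nlinarith [h]
            have := key x₀ (g i) (by rw [← hx₀, ← hg i]; exact hq')
            omega
          · -- g i ≤ x₀ + L : from p i ≤ (D/ε) q
            have hp' : p i ≤ (D / ε) * q := by
              rw [div_mul_eq_mul_div, le_div_iff₀ hε]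
              have h := hhigh i
              rw [div_mul_eq_mul_div, div_le_iff₀ hD0] at h
              nlinarith [h]
            have := key (g i) x₀ (by rw [← hx₀, ← hg i]; exact hp')
            omega
      · funext i; exact (hg i).symm
    have hfin : (gridVecs ε c q D d).Finite :=
      (F.finite_toSet.image _).subset hsubset
    refine ⟨hfin, ?_⟩
    have hcard : (gridVecs ε c q D d).ncard ≤ F.card := by
      calc (gridVecs ε c q D d).ncard
          ≤ ((fun g : Fin D → ℤ => fun i => c * b ^ (g i)) '' ↑F).ncard :=
            Set.ncard_le_ncard hsubset (F.finite_toSet.image _)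
        _ ≤ (↑F : Set (Fin D → ℤ)).ncard := Set.ncard_image_le F.finite_toSet
        _ = F.card := Set.ncard_coe_finset F
    have hFcard : F.card = (2 * L + 1).toNat ^ (D - 1) := by
      rw [hF, Fintype.card_piFinset]
      have : ∀ i : Fin D,
          ((if i = d then ({x₀} : Finset ℤ) else Finset.Icc (x₀ - L) (x₀ + L)).card)
          = if i = d then 1 else (2 * L + 1).toNat := by
        intro i
        by_cases hi : i = d
        · simp [hi]
        · simp only [if_neg hi, Int.card_Icc]
          congr 1; ring
      rw [Finset.prod_congr rfl (fun i _ => this i)]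
      rw [← Finset.mul_prod_erase Finset.univ _ (Finset.mem_univ d), if_pos rfl, one_mul]
      rw [Finset.prod_congr rfl (fun i hi => if_neg (Finset.ne_of_mem_erase hi)),
        Finset.prod_const, Finset.card_erase_of_mem (Finset.mem_univ d), Finset.card_univ,
        Fintype.card_fin]
    calc ((gridVecs ε c q D d).ncard : ℤ) ≤ (F.card : ℤ) := by exact_mod_cast hcard
      _ = ((2 * L + 1).toNat : ℤ) ^ (D - 1) := by rw [hFcard]; push_cast; ring
      _ = (2 * L + 1) ^ (D - 1) := by rw [Int.toNat_of_nonneg hL1]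
  · have hempty : gridVecs ε c q D d = ∅ := by
      ext p
      simp only [Set.mem_empty_iff_false, iff_false]
      rintro ⟨hgrid, hpd, -⟩
      obtain ⟨x, hx⟩ := hgrid d
      exact hex ⟨x, by rw [← hpd, hx]⟩
    rw [hempty]
    simpa using hRHS
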